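/- For every c ∈ X* one has sup(RLID¹_c) ≤ sup(RLID⁴_c) ≤ sup(RLID⁷_c) and sup(RLID¹_c) ≤ sup(RLID⁵_c) ≤ sup(RLID⁷_c), where all suprema and infima are taken in [−∞,+∞]. -/

import Mathlib

open Pointwise

variable {X : Type*} [AddCommGroup X] [Module ℝ X] [TopologicalSpace X]
  [IsTopologicalAddGroup X] [ContinuousSMul ℝ X] [LocallyConvexSpace ℝ X] [T2Space X]
  {T : Type*}

/-- The value of the robust dual problem (RLID¹_c). -/
noncomputable def supRLID1 (U : T → Set (WeakDual ℝ X × ℝ)) (c : WeakDual ℝ X) : EReal :=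
  sSup {y : EReal | ∃ v ∈ ⋃ t, U t, ∃ l : ℝ, 0 ≤ l ∧ c = -(l • v.1) ∧
    y = ((-(l * v.2) : ℝ) : EReal)}

/-- The value of the robust dual problem (RLID⁴_c). -/
noncomputable def supRLID4 (U : T → Set (WeakDual ℝ X × ℝ)) (c : WeakDual ℝ X) : EReal :=
  ⨆ l : {l : ℝ // 0 ≤ l}, ⨆ t : T, ⨅ x : X, ⨆ v : U t,
    (((c x + l.1 * ((v : WeakDual ℝ X × ℝ).1 x) - l.1 * (v : WeakDual ℝ X × ℝ).2) : ℝ) : EReal)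

/-- The value of the robust dual problem (RLID⁵_c). -/
noncomputable def supRLID5 (U : T → Set (WeakDual ℝ X × ℝ)) (c : WeakDual ℝ X) : EReal :=
  ⨆ l : {l : ℝ // 0 ≤ l}, ⨆ u : {u : T → WeakDual ℝ X × ℝ // ∀ s, u s ∈ U s},
    ⨅ x : X, ⨆ t : T,
      (((c x + l.1 * ((u.1 t).1 x) - l.1 * (u.1 t).2) : ℝ) : EReal)

/-- The value of the robust dual problem (RLID⁷_c). -/
noncomputable def supRLID7 (U : T → Set (WeakDual ℝ X × ℝ)) (c : WeakDual ℝ X) : EReal :=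
  ⨆ l : {l : ℝ // 0 ≤ l}, ⨅ x : X, ⨆ v : (⋃ t, U t : Set (WeakDual ℝ X × ℝ)),
    (((c x + l.1 * ((v : WeakDual ℝ X × ℝ).1 x) - l.1 * (v : WeakDual ℝ X × ℝ).2) : ℝ) : EReal)

/-- Proposition 3.2: relations between the values of the robust dual problems
(RLID¹_c), (RLID⁴_c), (RLID⁵_c) and (RLID⁷_c). -/
theorem stmt9 [Nonempty T] (U : T → Set (WeakDual ℝ X × ℝ)) (hU : ∀ t, (U t).Nonempty)
    (c : WeakDual ℝ X) :
    supRLID1 U c ≤ supRLID4 U c ∧ supRLID1 U c ≤ supRLID5 U c ∧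
      supRLID4 U c ≤ supRLID7 U c ∧ supRLID5 U c ≤ supRLID7 U c := by

  have key : ∀ (v : WeakDual ℝ X × ℝ) (l : ℝ), c = -(l • v.1) →
      ∀ x : X, ((-(l * v.2) : ℝ) : EReal) = ((c x + l * (v.1 x) - l * v.2 : ℝ) : EReal) := by
    intro v l hc x
    have : c x = -(l * (v.1 x)) := by rw [hc]; rfl
    rw [this]; norm_num
  refine ⟨?_, ?_, ?_, ?_⟩
  · -- 1 ≤ 4
    refine sSup_le ?_
    rintro y ⟨v, hv, l, hl, hc, rfl⟩
    rcases Set.mem_iUnion.mp hv with ⟨t, hvt⟩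
    refine le_iSup_of_le ⟨l, hl⟩ (le_iSup_of_le t (le_iInf fun x => ?_))
    refine le_iSup_of_le ⟨v, hvt⟩ ?_
    exact le_of_eq (key v l hc x)
  · -- 1 ≤ 5
    refine sSup_le ?_
    rintro y ⟨v, hv, l, hl, hc, rfl⟩
    rcases Set.mem_iUnion.mp hv with ⟨t, hvt⟩
    classical
    refine le_iSup_of_le ⟨l, hl⟩ ?_
    refine le_iSup_of_le ⟨Function.update (fun s => (hU s).some) t v, ?_⟩ ?_
    · intro s
      rcases eq_or_ne s t with rfl | hs
      · simpa using hvt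
      · simpa [Function.update_of_ne hs] using (hU s).some_mem
    · refine le_iInf fun x => le_iSup_of_le t ?_
      simp only [Function.update_self]
      exact le_of_eq (key v l hc x)
  · -- 4 ≤ 7
    refine iSup_le fun l => iSup_le fun t => le_iSup_of_le l (iInf_mono fun x => ?_)
    refine iSup_le fun v => le_iSup_of_le ⟨v.1, Set.mem_iUnion.mpr ⟨t, v.2⟩⟩ le_rfl
  · -- 5 ≤ 7
    refine iSup_le fun l => iSup_le fun u => le_iSup_of_le l (iInf_mono fun x => ?_)
    refine iSup_le fun t => le_iSup_of_le ⟨u.1 t, Set.mem_iUnion.mpr ⟨t, u.2 t⟩⟩ le_rfl
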